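/- For every t ∈ ℝ with t ≠ 2 and t ≠ −2, and every R > 0, there exist θ, θ′ ∈ M′ such that θ′ − θ = t·e₃ and ‖θ‖ > R, ‖θ′‖ > R; that is, in the relation θ′ − θ = ξ with |θ| → ∞ one may replace M by M′ for ξ = t·e₃ with t ≠ ±2. -/

import Mathlib

open Complex

/-- The bilinear "dot product" on `ℂ³` without complex conjugation. -/
noncomputable def cdot (θ w : EuclideanSpace ℂ (Fin 3)) : ℂ :=
  θ 0 * w 0 + θ 1 * w 1 + θ 2 * w 2

/-- The algebraic variety `M = {θ ∈ ℂ³ : θ·θ = 1}`. -/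
noncomputable def M : Set (EuclideanSpace ℂ (Fin 3)) := {θ | cdot θ θ = 1}

/-- The subset `M′ = {(sin ϑ cos φ, sin ϑ sin φ, cos ϑ) : ϑ, φ ∈ ℂ}`. -/
noncomputable def M' : Set (EuclideanSpace ℂ (Fin 3)) :=
  {θ | ∃ ϑ φ : ℂ,
    θ = (WithLp.toLp 2 ![Complex.sin ϑ * Complex.cos φ, Complex.sin ϑ * Complex.sin φ,
      Complex.cos ϑ] : EuclideanSpace ℂ (Fin 3))}

/-- For every real `t ≠ ±2` and every `R > 0` there exist `θ, θ′ ∈ M′` with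
`θ′ − θ = t·e₃`, `‖θ‖ > R` and `‖θ′‖ > R`: in the relation `θ′ − θ = ξ`,
`|θ| → ∞`, one may replace `M` by `M′` for `ξ = t·e₃`, `t ≠ ±2`. -/
lemma coord_le_norm (θ : EuclideanSpace ℂ (Fin 3)) (i : Fin 3) : ‖θ i‖ ≤ ‖θ‖ := by
  rw [EuclideanSpace.norm_eq]
  have h1 : ‖θ i‖ ^ 2 ≤ ∑ j, ‖θ j‖ ^ 2 :=
    Finset.single_le_sum (f := fun j => ‖θ j‖ ^ 2) (fun j _ => sq_nonneg _) (Finset.mem_univ i)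
  calc ‖θ i‖ = Real.sqrt (‖θ i‖ ^ 2) := (Real.sqrt_sq (norm_nonneg _)).symm
    _ ≤ _ := Real.sqrt_le_sqrt h1

lemma cosh_big (C : ℝ) : C < Real.cosh (2 * C) := by
  have h1 : Real.exp (2 * C) ≥ 2 * C + 1 := Real.add_one_le_exp _
  have h2 : Real.cosh (2 * C) = (Real.exp (2 * C) + Real.exp (-(2 * C))) / 2 := Real.cosh_eq _
  have h3 := Real.exp_pos (-(2 * C))
  nlinarith

theorem exists_large_theta_pair_in_Mprime (t : ℝ) (ht2 : t ≠ 2) (ht2' : t ≠ -2)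
    (R : ℝ) (hR : R > 0) :
    ∃ θ ∈ M', ∃ θ' ∈ M',
      θ' - θ = (WithLp.toLp 2 (fun i => (t : ℂ) * (![0, 0, 1] : Fin 3 → ℂ) i) :
        EuclideanSpace ℂ (Fin 3)) ∧
      ‖θ‖ > R ∧ ‖θ'‖ > R := by
  obtain ⟨ϑ, hϑ⟩ := Complex.cos_surjective (-(t : ℂ) / 2)
  have hs : Complex.sin ϑ ≠ 0 := by
    intro h
    have h1 := Complex.sin_sq_add_cos_sq ϑ
    rw [h, hϑ] at h1
    have h2 : ((t : ℂ) - 2) * ((t : ℂ) + 2) = 0 := by linear_combination 4 * h1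
    rcases mul_eq_zero.mp h2 with h3 | h3
    · exact ht2 (by exact_mod_cast sub_eq_zero.mp h3)
    · exact ht2' (by exact_mod_cast eq_neg_of_add_eq_zero_left h3)
  set s := Complex.sin ϑ with hsdef
  have habs : 0 < ‖s‖ := norm_pos_iff.mpr hs
  set y : ℝ := 2 * (R / ‖s‖) with hy
  have hcosh : R / ‖s‖ < Real.cosh y := cosh_big _
  set φ : ℂ := (y : ℂ) * I with hφ
  have hcos : Complex.cos φ = (Real.cosh y : ℂ) := by
    rw [hφ, Complex.cos_mul_I, Complex.ofReal_cosh]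
  have hbig : R < ‖s * Complex.cos φ‖ := by
    rw [norm_mul, hcos, Complex.norm_real, Real.norm_eq_abs,
      abs_of_pos (lt_of_le_of_lt (div_nonneg hR.le habs.le) hcosh : (0:ℝ) < Real.cosh y)]
    calc R = ‖s‖ * (R / ‖s‖) := by field_simp
      _ < ‖s‖ * Real.cosh y := by
          exact mul_lt_mul_of_pos_left hcosh habs
  refine ⟨WithLp.toLp 2 ![s * Complex.cos φ, s * Complex.sin φ, Complex.cos ϑ], ⟨ϑ, φ, rfl⟩,
    WithLp.toLp 2 ![Complex.sin (Real.pi - ϑ) * Complex.cos φ, Complex.sin (Real.pi - ϑ) * Complex.sin φ,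
      Complex.cos (Real.pi - ϑ)], ⟨(Real.pi : ℂ) - ϑ, φ, rfl⟩, ?_, ?_, ?_⟩
  · ext i
    have hsin : Complex.sin ((Real.pi : ℂ) - ϑ) = s := Complex.sin_pi_sub ϑ
    have hcosϑ : Complex.cos ((Real.pi : ℂ) - ϑ) = -Complex.cos ϑ := Complex.cos_pi_sub ϑ
    fin_cases i <;>
      simp [PiLp.sub_apply, hsin, hcosϑ, hϑ] <;> ring
  · calc R < ‖s * Complex.cos φ‖ := hbig
      _ = ‖(WithLp.toLp 2 ![s * Complex.cos φ, s * Complex.sin φ, Complex.cos ϑ] :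
            EuclideanSpace ℂ (Fin 3)) 0‖ := by simp
      _ ≤ _ := coord_le_norm _ 0
  · have hsin : Complex.sin ((Real.pi : ℂ) - ϑ) = s := Complex.sin_pi_sub ϑ
    calc R < ‖s * Complex.cos φ‖ := hbig
      _ = ‖(WithLp.toLp 2 ![Complex.sin ((Real.pi:ℂ) - ϑ) * Complex.cos φ,
            Complex.sin ((Real.pi:ℂ) - ϑ) * Complex.sin φ,
            Complex.cos ((Real.pi:ℂ) - ϑ)] : EuclideanSpace ℂ (Fin 3)) 0‖ := by simp [hsin]
      _ ≤ _ := coord_le_norm _ 0
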